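/- Let Y_0, Y_1, Y_2 be positive real numbers and let a be a real number with 0 < a < min(Y_0, Y_1). Then the complex-valued function x ↦ ((Y_0 − a − ix)(Y_1 − a − ix)(Y_2 + a + ix)(a + ix))^{−1} is integrable on ℝ, and (1/(2π · 2!)) ∫_{−∞}^{∞} dx / ((Y_0 − a − ix)(Y_1 − a − ix)(Y_2 + a + ix)(a + ix)) = (1/2!) · ( 1/(Y_0 Y_1 Y_2) − 1/((Y_0 + Y_2)(Y_1 + Y_2) Y_2) ). -/

import Mathlib

open MeasureTheory

open Real Filter

namespace Stmt18Aux

lemma ne_sub {c : ℝ} (hc : 0 < c) (x : ℝ) : (c : ℂ) - Complex.I * x ≠ 0 := by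
  intro h
  have := congrArg Complex.re h
  simp at this
  linarith

lemma ne_add {c : ℝ} (hc : 0 < c) (x : ℝ) : (c : ℂ) + Complex.I * x ≠ 0 := by
  intro h
  have := congrArg Complex.re h
  simp at this
  linarith

lemma integrable_kernel {m : ℝ} (hm : 0 < m) :
    Integrable (fun x : ℝ => (m ^ 2 + x ^ 2)⁻¹) := by
  have h : Integrable (fun x : ℝ => (m⁻¹ * m⁻¹) * (1 + (x / m) ^ 2)⁻¹) :=
    (integrable_inv_one_add_sq.comp_div hm.ne').const_mul _
  refine h.congr (ae_of_all _ fun x => ?_)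
  have h1 : m ^ 2 + x ^ 2 ≠ 0 := by positivity
  field_simp

lemma integral_odd {v : ℝ → ℝ} (hv : Integrable v) (hodd : ∀ x, v (-x) = - v x) :
    ∫ x, v x = 0 := by
  have h := integral_neg_eq_self v (volume : Measure ℝ)
  simp only [hodd, integral_neg] at h
  linarith

lemma tendsto_atBot_of_odd {F : ℝ → ℝ} {l : ℝ} (hodd : ∀ x, F (-x) = - F x)
    (h : Tendsto F atTop (nhds l)) : Tendsto F atBot (nhds (-l)) := by
  have h2 : Tendsto (fun x => F (-x)) atBot (nhds l) := h.comp tendsto_neg_atBot_atTop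
  have h3 : Tendsto (fun x => - F x) atBot (nhds l) := by
    refine h2.congr fun x => ?_
    rw [hodd]
  simpa using h3.neg

lemma tendsto_ratio {c : ℝ} (C : ℝ) (hc : 0 < c) :
    Tendsto (fun x : ℝ => C * x / (x ^ 2 + c)) atTop (nhds 0) := by
  apply squeeze_zero_norm' (a := fun x : ℝ => |C| / x)
  · filter_upwards [eventually_gt_atTop 0] with x hx
    have h1 : 0 < x ^ 2 + c := by positivity
    rw [Real.norm_eq_abs, abs_div, abs_mul, abs_of_pos h1, abs_of_pos hx,
      div_le_div_iff₀ h1 hx]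
    nlinarith [abs_nonneg C]
  · have := tendsto_inv_atTop_zero (𝕜 := ℝ)
    have h2 := this.const_mul |C|
    simpa [div_eq_mul_inv] using h2

lemma hasDerivAt_arctan_div {c : ℝ} (hc : 0 < c) (x : ℝ) :
    HasDerivAt (fun y : ℝ => Real.arctan (y / c)) (c / (c ^ 2 + x ^ 2)) x := by
  have h := (Real.hasDerivAt_arctan (x / c)).comp x ((hasDerivAt_id x).div_const c)
  have he : 1 / (1 + (x / c) ^ 2) * (1 / c) = c / (c ^ 2 + x ^ 2) := by
    have h1 : c ^ 2 + x ^ 2 ≠ 0 := by positivity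
    field_simp
  rw [← he]
  exact h

lemma tendsto_arctan_div_atTop {c : ℝ} (hc : 0 < c) :
    Tendsto (fun x : ℝ => Real.arctan (x / c)) atTop (nhds (π / 2)) := by
  have h1 : Tendsto (fun x : ℝ => x / c) atTop atTop := tendsto_id.atTop_div_const hc
  exact (tendsto_nhds_of_tendsto_nhdsWithin Real.tendsto_arctan_atTop).comp h1

end Stmt18Aux

namespace Stmt18Aux

lemma norm_prod_ge {c d x : ℝ} (hc : 0 < c) (hd : 0 < d) (z w : ℂ)
    (hz : Complex.normSq z = c ^ 2 + x ^ 2) (hw : Complex.normSq w = d ^ 2 + x ^ 2) :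
    (min c d) ^ 2 + x ^ 2 ≤ ‖z * w‖ := by
  have hm : 0 < min c d := lt_min hc hd
  have h1 : ‖z * w‖ = Real.sqrt ((c ^ 2 + x ^ 2) * (d ^ 2 + x ^ 2)) := by
    rw [Complex.norm_def, Complex.normSq_mul, hz, hw]
  rw [h1, show (min c d) ^ 2 + x ^ 2 = Real.sqrt (((min c d) ^ 2 + x ^ 2) ^ 2) from
    (Real.sqrt_sq (by positivity)).symm]
  apply Real.sqrt_le_sqrt
  have hca : min c d ≤ c := min_le_left _ _
  have hcb : min c d ≤ d := min_le_right _ _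
  have e1 : (min c d) ^ 2 + x ^ 2 ≤ c ^ 2 + x ^ 2 := by nlinarith [hm.le]
  have e2 : (min c d) ^ 2 + x ^ 2 ≤ d ^ 2 + x ^ 2 := by nlinarith [hm.le]
  have e0 : (0:ℝ) ≤ (min c d) ^ 2 + x ^ 2 := by positivity
  calc ((min c d) ^ 2 + x ^ 2) ^ 2 = ((min c d) ^ 2 + x ^ 2) * ((min c d) ^ 2 + x ^ 2) := sq _
    _ ≤ (c ^ 2 + x ^ 2) * (d ^ 2 + x ^ 2) := mul_le_mul e1 e2 e0 (by positivity)

lemma normSq_sub (c x : ℝ) : Complex.normSq ((c : ℂ) - Complex.I * x) = c ^ 2 + x ^ 2 := by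
  simp [Complex.normSq_apply]
  ring

lemma normSq_add (c x : ℝ) : Complex.normSq ((c : ℂ) + Complex.I * x) = c ^ 2 + x ^ 2 := by
  simp [Complex.normSq_apply]
  ring

lemma integral_coe {u : ℝ → ℝ} : ∫ x : ℝ, ((u x : ℝ) : ℂ) = ((∫ x : ℝ, u x : ℝ) : ℂ) := by
  calc ∫ x : ℝ, ((u x : ℝ) : ℂ) = ∫ x : ℝ, u x • (1 : ℂ) := by
        simp [Complex.real_smul]
    _ = (∫ x : ℝ, u x) • (1 : ℂ) := integral_smul_const _ _
    _ = ((∫ x : ℝ, u x : ℝ) : ℂ) := by simp [Complex.real_smul]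

lemma integral_coe_mul_I {v : ℝ → ℝ} :
    ∫ x : ℝ, ((v x : ℝ) : ℂ) * Complex.I = ((∫ x : ℝ, v x : ℝ) : ℂ) * Complex.I := by
  calc ∫ x : ℝ, ((v x : ℝ) : ℂ) * Complex.I = ∫ x : ℝ, v x • Complex.I := by
        simp [Complex.real_smul]
    _ = (∫ x : ℝ, v x) • Complex.I := integral_smul_const _ _
    _ = ((∫ x : ℝ, v x : ℝ) : ℂ) * Complex.I := by simp [Complex.real_smul]

lemma same_left {A B : ℝ} (hA : 0 < A) (hB : 0 < B) :
    Integrable (fun x : ℝ => (((A : ℂ) - Complex.I * x) * ((B : ℂ) - Complex.I * x))⁻¹) ∧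
    ∫ x : ℝ, (((A : ℂ) - Complex.I * x) * ((B : ℂ) - Complex.I * x))⁻¹ = 0 := by
  have hm : 0 < min A B := lt_min hA hB
  have hAB : 0 < A + B := by linarith
  have hdec : ∀ x : ℝ, (((A : ℂ) - Complex.I * x) * ((B : ℂ) - Complex.I * x))⁻¹ =
      (((A * B - x ^ 2) / ((A ^ 2 + x ^ 2) * (B ^ 2 + x ^ 2)) : ℝ) : ℂ) +
      (((A + B) * x / ((A ^ 2 + x ^ 2) * (B ^ 2 + x ^ 2)) : ℝ) : ℂ) * Complex.I := by
    intro x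
    refine inv_eq_of_mul_eq_one_left ?_
    have hq : ((A ^ 2 + x ^ 2) * (B ^ 2 + x ^ 2) : ℝ) ≠ 0 := by positivity
    apply Complex.ext <;>
      simp only [Complex.mul_re, Complex.mul_im, Complex.add_re, Complex.add_im,
        Complex.sub_re, Complex.sub_im, Complex.ofReal_re, Complex.ofReal_im,
        Complex.I_re, Complex.I_im, Complex.one_re, Complex.one_im] <;>
      (field_simp; ring)
  have hcont : Continuous fun x : ℝ =>
      (((A : ℂ) - Complex.I * x) * ((B : ℂ) - Complex.I * x))⁻¹ := by
    apply Continuous.inv₀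
    · fun_prop
    · intro x
      exact mul_ne_zero (ne_sub hA x) (ne_sub hB x)
  have hbound : ∀ x : ℝ,
      ‖(((A : ℂ) - Complex.I * x) * ((B : ℂ) - Complex.I * x))⁻¹‖ ≤ ((min A B) ^ 2 + x ^ 2)⁻¹ := by
    intro x
    rw [norm_inv]
    exact inv_anti₀ (by positivity)
      (norm_prod_ge hA hB _ _ (normSq_sub A x) (normSq_sub B x))
  have hint : Integrable fun x : ℝ =>
      (((A : ℂ) - Complex.I * x) * ((B : ℂ) - Complex.I * x))⁻¹ :=
    (integrable_kernel hm).mono' hcont.aestronglyMeasurable (ae_of_all _ hbound)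
  refine ⟨hint, ?_⟩
  have hu_int : Integrable fun x : ℝ =>
      (A * B - x ^ 2) / ((A ^ 2 + x ^ 2) * (B ^ 2 + x ^ 2)) :=
    hint.re.congr (ae_of_all _ fun x => by
      simp only [hdec, RCLike.re_to_complex, Complex.add_re, Complex.mul_re, Complex.add_im,
        Complex.mul_im, Complex.ofReal_re, Complex.ofReal_im, Complex.I_re, Complex.I_im]
      ring)
  have hv_int : Integrable fun x : ℝ =>
      (A + B) * x / ((A ^ 2 + x ^ 2) * (B ^ 2 + x ^ 2)) :=
    hint.im.congr (ae_of_all _ fun x => by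
      simp only [hdec, RCLike.im_to_complex, Complex.add_re, Complex.mul_re, Complex.add_im,
        Complex.mul_im, Complex.ofReal_re, Complex.ofReal_im, Complex.I_re, Complex.I_im]
      ring)
  have hIu : ∫ x : ℝ, (A * B - x ^ 2) / ((A ^ 2 + x ^ 2) * (B ^ 2 + x ^ 2)) = 0 := by
    rcases eq_or_ne A B with rfl | hne
    · -- equal case: antiderivative x / (x² + A²)
      have hder : ∀ x : ℝ, HasDerivAt (fun y : ℝ => y / (y ^ 2 + A ^ 2))
          ((A * A - x ^ 2) / ((A ^ 2 + x ^ 2) * (A ^ 2 + x ^ 2))) x := by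
        intro x
        have hden : (0:ℝ) < x ^ 2 + A ^ 2 := by positivity
        have h2 : HasDerivAt (fun y : ℝ => y ^ 2 + A ^ 2) (2 * x) x := by
          simpa using (hasDerivAt_pow 2 x).add_const (A ^ 2)
        have hd := (hasDerivAt_id x).div h2 hden.ne'
        have heq : (1 * (x ^ 2 + A ^ 2) - x * (2 * x)) / (x ^ 2 + A ^ 2) ^ 2 =
            (A * A - x ^ 2) / ((A ^ 2 + x ^ 2) * (A ^ 2 + x ^ 2)) := by
          rw [div_eq_div_iff (by positivity) (by positivity)]
          ring
        rw [← heq]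
        exact hd
      have htop : Tendsto (fun y : ℝ => y / (y ^ 2 + A ^ 2)) atTop (nhds 0) := by
        have := tendsto_ratio (c := A ^ 2) 1 (by positivity)
        simpa using this
      have hodd : ∀ x : ℝ, (fun y : ℝ => y / (y ^ 2 + A ^ 2)) (-x)
          = - (fun y : ℝ => y / (y ^ 2 + A ^ 2)) x := by
        intro x
        simp only [neg_sq, neg_div]
      have hbot := tendsto_atBot_of_odd hodd htop
      rw [neg_zero] at hbot
      simpa using integral_of_hasDerivAt_of_tendsto hder hu_int hbot htop
    · -- distinct case: antiderivative (B-A)⁻¹ (arctan(x/A) - arctan(x/B))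
      have hBA : B - A ≠ 0 := sub_ne_zero.mpr (Ne.symm hne)
      have hder : ∀ x : ℝ, HasDerivAt
          (fun y : ℝ => (B - A)⁻¹ * (Real.arctan (y / A) - Real.arctan (y / B)))
          ((A * B - x ^ 2) / ((A ^ 2 + x ^ 2) * (B ^ 2 + x ^ 2))) x := by
        intro x
        have hd := ((hasDerivAt_arctan_div hA x).sub (hasDerivAt_arctan_div hB x)).const_mul
          (B - A)⁻¹
        have heq : (B - A)⁻¹ * (A / (A ^ 2 + x ^ 2) - B / (B ^ 2 + x ^ 2)) =
            (A * B - x ^ 2) / ((A ^ 2 + x ^ 2) * (B ^ 2 + x ^ 2)) := by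
          have h1 : (A ^ 2 + x ^ 2 : ℝ) ≠ 0 := by positivity
          have h2 : (B ^ 2 + x ^ 2 : ℝ) ≠ 0 := by positivity
          field_simp
          ring
        rw [← heq]
        exact hd
      have htop : Tendsto
          (fun y : ℝ => (B - A)⁻¹ * (Real.arctan (y / A) - Real.arctan (y / B)))
          atTop (nhds 0) := by
        have h := ((tendsto_arctan_div_atTop hA).sub (tendsto_arctan_div_atTop hB)).const_mul
          (B - A)⁻¹
        simpa using h
      have hodd : ∀ x : ℝ,
          (fun y : ℝ => (B - A)⁻¹ * (Real.arctan (y / A) - Real.arctan (y / B))) (-x)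
          = - (fun y : ℝ => (B - A)⁻¹ * (Real.arctan (y / A) - Real.arctan (y / B))) x := by
        intro x
        simp only [neg_div, Real.arctan_neg]
        ring
      have hbot := tendsto_atBot_of_odd hodd htop
      rw [neg_zero] at hbot
      simpa using integral_of_hasDerivAt_of_tendsto hder hu_int hbot htop
  have hIv : ∫ x : ℝ, (A + B) * x / ((A ^ 2 + x ^ 2) * (B ^ 2 + x ^ 2)) = 0 := by
    refine integral_odd hv_int fun x => ?_
    rw [neg_sq, mul_neg, neg_div]
  calc ∫ x : ℝ, (((A : ℂ) - Complex.I * x) * ((B : ℂ) - Complex.I * x))⁻¹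
      = ∫ x : ℝ, ((((A * B - x ^ 2) / ((A ^ 2 + x ^ 2) * (B ^ 2 + x ^ 2)) : ℝ) : ℂ) +
          (((A + B) * x / ((A ^ 2 + x ^ 2) * (B ^ 2 + x ^ 2)) : ℝ) : ℂ) * Complex.I) :=
        integral_congr_ae (ae_of_all _ hdec)
    _ = 0 := by
        have huc : Integrable (fun x : ℝ =>
            (((A * B - x ^ 2) / ((A ^ 2 + x ^ 2) * (B ^ 2 + x ^ 2)) : ℝ) : ℂ)) := hu_int.ofReal
        have hvc : Integrable (fun x : ℝ =>
            ((((A + B) * x / ((A ^ 2 + x ^ 2) * (B ^ 2 + x ^ 2)) : ℝ) : ℂ)) * Complex.I) :=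
          (hv_int.ofReal.mul_const Complex.I : _)
        rw [integral_add huc hvc, integral_coe, integral_coe_mul_I, hIu, hIv]
        simp

end Stmt18Aux

namespace Stmt18Aux

lemma cross {L R : ℝ} (hL : 0 < L) (hR : 0 < R) :
    Integrable (fun x : ℝ => (((L : ℂ) - Complex.I * x) * ((R : ℂ) + Complex.I * x))⁻¹) ∧
    ∫ x : ℝ, (((L : ℂ) - Complex.I * x) * ((R : ℂ) + Complex.I * x))⁻¹ =
      ((2 * π / (L + R) : ℝ) : ℂ) := by
  have hm : 0 < min L R := lt_min hL hR
  have hLR : 0 < L + R := by linarith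
  have hdec : ∀ x : ℝ, (((L : ℂ) - Complex.I * x) * ((R : ℂ) + Complex.I * x))⁻¹ =
      (((L * R + x ^ 2) / ((L ^ 2 + x ^ 2) * (R ^ 2 + x ^ 2)) : ℝ) : ℂ) +
      (((R - L) * x / ((L ^ 2 + x ^ 2) * (R ^ 2 + x ^ 2)) : ℝ) : ℂ) * Complex.I := by
    intro x
    refine inv_eq_of_mul_eq_one_left ?_
    have hq : ((L ^ 2 + x ^ 2) * (R ^ 2 + x ^ 2) : ℝ) ≠ 0 := by positivity
    apply Complex.ext <;>
      simp only [Complex.mul_re, Complex.mul_im, Complex.add_re, Complex.add_im,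
        Complex.sub_re, Complex.sub_im, Complex.ofReal_re, Complex.ofReal_im,
        Complex.I_re, Complex.I_im, Complex.one_re, Complex.one_im] <;>
      (field_simp; ring)
  have hcont : Continuous fun x : ℝ =>
      (((L : ℂ) - Complex.I * x) * ((R : ℂ) + Complex.I * x))⁻¹ := by
    apply Continuous.inv₀
    · fun_prop
    · intro x
      exact mul_ne_zero (ne_sub hL x) (ne_add hR x)
  have hbound : ∀ x : ℝ,
      ‖(((L : ℂ) - Complex.I * x) * ((R : ℂ) + Complex.I * x))⁻¹‖ ≤
        ((min L R) ^ 2 + x ^ 2)⁻¹ := by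
    intro x
    rw [norm_inv]
    exact inv_anti₀ (by positivity)
      (norm_prod_ge hL hR _ _ (normSq_sub L x) (normSq_add R x))
  have hint : Integrable fun x : ℝ =>
      (((L : ℂ) - Complex.I * x) * ((R : ℂ) + Complex.I * x))⁻¹ :=
    (integrable_kernel hm).mono' hcont.aestronglyMeasurable (ae_of_all _ hbound)
  refine ⟨hint, ?_⟩
  have hu_int : Integrable fun x : ℝ =>
      (L * R + x ^ 2) / ((L ^ 2 + x ^ 2) * (R ^ 2 + x ^ 2)) :=
    hint.re.congr (ae_of_all _ fun x => by
      simp only [hdec, RCLike.re_to_complex, Complex.add_re, Complex.mul_re, Complex.add_im,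
        Complex.mul_im, Complex.ofReal_re, Complex.ofReal_im, Complex.I_re, Complex.I_im]
      ring)
  have hv_int : Integrable fun x : ℝ =>
      (R - L) * x / ((L ^ 2 + x ^ 2) * (R ^ 2 + x ^ 2)) :=
    hint.im.congr (ae_of_all _ fun x => by
      simp only [hdec, RCLike.im_to_complex, Complex.add_re, Complex.mul_re, Complex.add_im,
        Complex.mul_im, Complex.ofReal_re, Complex.ofReal_im, Complex.I_re, Complex.I_im]
      ring)
  have hIu : ∫ x : ℝ, (L * R + x ^ 2) / ((L ^ 2 + x ^ 2) * (R ^ 2 + x ^ 2)) = 2 * π / (L + R) := by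
    have hder : ∀ x : ℝ, HasDerivAt
        (fun y : ℝ => (L + R)⁻¹ * (Real.arctan (y / L) + Real.arctan (y / R)))
        ((L * R + x ^ 2) / ((L ^ 2 + x ^ 2) * (R ^ 2 + x ^ 2))) x := by
      intro x
      have hd := ((hasDerivAt_arctan_div hL x).add (hasDerivAt_arctan_div hR x)).const_mul
        (L + R)⁻¹
      have heq : (L + R)⁻¹ * (L / (L ^ 2 + x ^ 2) + R / (R ^ 2 + x ^ 2)) =
          (L * R + x ^ 2) / ((L ^ 2 + x ^ 2) * (R ^ 2 + x ^ 2)) := by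
        have h1 : (L ^ 2 + x ^ 2 : ℝ) ≠ 0 := by positivity
        have h2 : (R ^ 2 + x ^ 2 : ℝ) ≠ 0 := by positivity
        field_simp
        ring
      rw [← heq]
      exact hd
    have htop : Tendsto
        (fun y : ℝ => (L + R)⁻¹ * (Real.arctan (y / L) + Real.arctan (y / R)))
        atTop (nhds ((L + R)⁻¹ * (π / 2 + π / 2))) :=
      ((tendsto_arctan_div_atTop hL).add (tendsto_arctan_div_atTop hR)).const_mul (L + R)⁻¹
    have hodd : ∀ x : ℝ,
        (fun y : ℝ => (L + R)⁻¹ * (Real.arctan (y / L) + Real.arctan (y / R))) (-x)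
        = - (fun y : ℝ => (L + R)⁻¹ * (Real.arctan (y / L) + Real.arctan (y / R))) x := by
      intro x
      simp only [neg_div, Real.arctan_neg]
      ring
    have hbot := tendsto_atBot_of_odd hodd htop
    have h := integral_of_hasDerivAt_of_tendsto hder hu_int hbot htop
    rw [h]
    field_simp
    ring
  have hIv : ∫ x : ℝ, (R - L) * x / ((L ^ 2 + x ^ 2) * (R ^ 2 + x ^ 2)) = 0 := by
    refine integral_odd hv_int fun x => ?_
    rw [neg_sq, mul_neg, neg_div]
  calc ∫ x : ℝ, (((L : ℂ) - Complex.I * x) * ((R : ℂ) + Complex.I * x))⁻¹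
      = ∫ x : ℝ, ((((L * R + x ^ 2) / ((L ^ 2 + x ^ 2) * (R ^ 2 + x ^ 2)) : ℝ) : ℂ) +
          (((R - L) * x / ((L ^ 2 + x ^ 2) * (R ^ 2 + x ^ 2)) : ℝ) : ℂ) * Complex.I) :=
        integral_congr_ae (ae_of_all _ hdec)
    _ = ((2 * π / (L + R) : ℝ) : ℂ) := by
        have huc : Integrable (fun x : ℝ =>
            (((L * R + x ^ 2) / ((L ^ 2 + x ^ 2) * (R ^ 2 + x ^ 2)) : ℝ) : ℂ)) := hu_int.ofReal
        have hvc : Integrable (fun x : ℝ =>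
            ((((R - L) * x / ((L ^ 2 + x ^ 2) * (R ^ 2 + x ^ 2)) : ℝ) : ℂ)) * Complex.I) :=
          (hv_int.ofReal.mul_const Complex.I : _)
        rw [integral_add huc hvc, integral_coe, integral_coe_mul_I, hIu, hIv]
        simp

lemma same_right {C D : ℝ} (hC : 0 < C) (hD : 0 < D) :
    Integrable (fun x : ℝ => (((C : ℂ) + Complex.I * x) * ((D : ℂ) + Complex.I * x))⁻¹) ∧
    ∫ x : ℝ, (((C : ℂ) + Complex.I * x) * ((D : ℂ) + Complex.I * x))⁻¹ = 0 := by
  have h := same_left hC hD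
  have heq : ∀ x : ℝ,
      (fun y : ℝ => (((C : ℂ) - Complex.I * y) * ((D : ℂ) - Complex.I * y))⁻¹) (-x) =
      (((C : ℂ) + Complex.I * x) * ((D : ℂ) + Complex.I * x))⁻¹ := by
    intro x
    push_cast
    ring_nf
  constructor
  · exact h.1.comp_neg.congr (ae_of_all _ heq)
  · rw [show (fun x : ℝ => (((C : ℂ) + Complex.I * x) * ((D : ℂ) + Complex.I * x))⁻¹) =
        (fun x : ℝ => (fun y : ℝ =>
          (((C : ℂ) - Complex.I * y) * ((D : ℂ) - Complex.I * y))⁻¹) (-x)) from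
      funext fun x => (heq x).symm]
    exact (integral_neg_eq_self
      (fun y : ℝ => (((C : ℂ) - Complex.I * y) * ((D : ℂ) - Complex.I * y))⁻¹)
      (volume : Measure ℝ)).trans h.2

end Stmt18Aux

namespace Stmt18Aux

lemma pairx {z w : ℂ} (hz : z ≠ 0) (hw : w ≠ 0) (hs : z + w ≠ 0) :
    z⁻¹ * w⁻¹ = (z + w)⁻¹ * z⁻¹ + (z + w)⁻¹ * w⁻¹ := by
  have h1 : z * z⁻¹ = 1 := mul_inv_cancel₀ hz
  have h2 : w * w⁻¹ = 1 := mul_inv_cancel₀ hw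
  have h3 : (z + w) * (z + w)⁻¹ = 1 := mul_inv_cancel₀ hs
  linear_combination (-(z⁻¹ * w⁻¹)) * h3 + ((z + w)⁻¹ * w⁻¹) * h1 + ((z + w)⁻¹ * z⁻¹) * h2

lemma final_algebra {p u v w : ℂ} (hp : p ≠ 0) (hu : u ≠ 0) (hv : v ≠ 0) (hw : w ≠ 0)
    (huw : u + w ≠ 0) (hvw : v + w ≠ 0) :
    1 / (2 * p * 2) * (((u + w) * u)⁻¹ * (2 * p / v) + ((u + w) * v)⁻¹ * (2 * p / (v + w)))
    = 1 / 2 * (1 / (u * v * w) - 1 / ((u + w) * (v + w) * w)) := by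
  have h2 : (2 : ℂ) ≠ 0 := two_ne_zero
  have d1 : v * ((u + w) * u) ≠ 0 := mul_ne_zero hv (mul_ne_zero huw hu)
  have d2 : (v + w) * ((u + w) * v) ≠ 0 := mul_ne_zero hvw (mul_ne_zero huw hv)
  have d3 : u * v * w ≠ 0 := mul_ne_zero (mul_ne_zero hu hv) hw
  have d4 : (u + w) * (v + w) * w ≠ 0 := mul_ne_zero (mul_ne_zero huw hvw) hw
  have dl : 2 * p * 2 * (v * ((u + w) * u) * ((v + w) * ((u + w) * v))) ≠ 0 :=
    mul_ne_zero (mul_ne_zero (mul_ne_zero h2 hp) h2) (mul_ne_zero d1 d2)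
  have dr : 2 * (u * v * w * ((u + w) * (v + w) * w)) ≠ 0 :=
    mul_ne_zero h2 (mul_ne_zero d3 d4)
  rw [inv_mul_eq_div, inv_mul_eq_div, div_div, div_div, div_add_div _ _ d1 d2,
    div_sub_div _ _ d3 d4, div_mul_div_comm, div_mul_div_comm, one_mul, one_mul,
    div_eq_div_iff dl dr]
  ring

lemma quadx {a b c d : ℂ} (ha : a ≠ 0) (hb : b ≠ 0) (hc : c ≠ 0) (hd : d ≠ 0)
    (hs1 : a + c ≠ 0) (hs2 : a + d ≠ 0) (hs3 : b + d ≠ 0) :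
    (a * b * c * d)⁻¹ =
      ((a + c) * (a + d))⁻¹ * (a * b)⁻¹ + ((a + c) * (a + d))⁻¹ * (b * d)⁻¹ +
      ((a + c) * (b + d))⁻¹ * (b * c)⁻¹ + ((a + c) * (b + d))⁻¹ * (c * d)⁻¹ := by
  have p1 := pairx ha hc hs1
  have p2 := pairx ha hd hs2
  have p3 := pairx hb hd hs3
  simp only [mul_inv]
  linear_combination (b⁻¹ * d⁻¹) * p1 + ((a + c)⁻¹ * b⁻¹) * p2 + ((a + c)⁻¹ * c⁻¹) * p3

end Stmt18Aux

set_option maxHeartbeats 1000000 in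
open Stmt18Aux in
/-- **Kernel contour-integral representation of the quadrilateral canonical function.**
For positive `Y₀, Y₁, Y₂` and `0 < a < min(Y₀, Y₁)`, the function
`x ↦ ((Y₀-a-ix)(Y₁-a-ix)(Y₂+a+ix)(a+ix))⁻¹` is integrable on `ℝ` and
`(1/(2π·2!)) ∫ dx (...)⁻¹ = (1/2!)(1/(Y₀Y₁Y₂) - 1/((Y₀+Y₂)(Y₁+Y₂)Y₂))`. -/
theorem stmt_18 (Y₀ Y₁ Y₂ a : ℝ) (h₀ : 0 < Y₀) (h₁ : 0 < Y₁) (h₂ : 0 < Y₂)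
    (ha : 0 < a) (ha' : a < min Y₀ Y₁) :
    Integrable (fun x : ℝ =>
      (((Y₀ - a : ℝ) - Complex.I * x) * ((Y₁ - a : ℝ) - Complex.I * x) *
          ((Y₂ + a : ℝ) + Complex.I * x) * ((a : ℝ) + Complex.I * x))⁻¹) ∧
    (1 / (2 * (Real.pi : ℂ) * (Nat.factorial 2 : ℂ))) *
        ∫ x : ℝ,
          (((Y₀ - a : ℝ) - Complex.I * x) * ((Y₁ - a : ℝ) - Complex.I * x) *
              ((Y₂ + a : ℝ) + Complex.I * x) * ((a : ℝ) + Complex.I * x))⁻¹ =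
      (1 / (Nat.factorial 2 : ℂ)) *
        (1 / ((Y₀ : ℂ) * (Y₁ : ℂ) * (Y₂ : ℂ)) -
          1 / (((Y₀ : ℂ) + (Y₂ : ℂ)) * ((Y₁ : ℂ) + (Y₂ : ℂ)) * (Y₂ : ℂ))) := by
  have haY₀ : a < Y₀ := lt_of_lt_of_le ha' (min_le_left _ _)
  have haY₁ : a < Y₁ := lt_of_lt_of_le ha' (min_le_right _ _)
  have hA : 0 < Y₀ - a := by linarith
  have hB : 0 < Y₁ - a := by linarith
  have hC : 0 < Y₂ + a := by linarith
  obtain ⟨hg₁i, hg₁⟩ := same_left hA hB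
  obtain ⟨hg₂i, hg₂⟩ := cross hB ha
  obtain ⟨hg₃i, hg₃⟩ := cross hB hC
  obtain ⟨hg₄i, hg₄⟩ := same_right hC ha
  set k₁ : ℂ := ((((Y₀ + Y₂) : ℝ) : ℂ) * ((Y₀ : ℝ) : ℂ))⁻¹ with hk₁
  set k₃ : ℂ := ((((Y₀ + Y₂) : ℝ) : ℂ) * ((Y₁ : ℝ) : ℂ))⁻¹ with hk₃
  have hdec : ∀ x : ℝ,
      (((Y₀ - a : ℝ) - Complex.I * x) * ((Y₁ - a : ℝ) - Complex.I * x) *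
          ((Y₂ + a : ℝ) + Complex.I * x) * ((a : ℝ) + Complex.I * x))⁻¹ =
      k₁ * ((((Y₀ - a : ℝ) : ℂ) - Complex.I * x) * (((Y₁ - a : ℝ) : ℂ) - Complex.I * x))⁻¹ +
      k₁ * ((((Y₁ - a : ℝ) : ℂ) - Complex.I * x) * (((a : ℝ) : ℂ) + Complex.I * x))⁻¹ +
      k₃ * ((((Y₁ - a : ℝ) : ℂ) - Complex.I * x) * (((Y₂ + a : ℝ) : ℂ) + Complex.I * x))⁻¹ +
      k₃ * ((((Y₂ + a : ℝ) : ℂ) + Complex.I * x) * (((a : ℝ) : ℂ) + Complex.I * x))⁻¹ := by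
    intro x
    have f1 := ne_sub hA x
    have f2 := ne_sub hB x
    have f3 := ne_add hC x
    have f4 := ne_add ha x
    have s1 : (((Y₀ - a : ℝ) : ℂ) - Complex.I * x) + (((Y₂ + a : ℝ) : ℂ) + Complex.I * x) =
        (((Y₀ + Y₂) : ℝ) : ℂ) := by push_cast; ring
    have s2 : (((Y₀ - a : ℝ) : ℂ) - Complex.I * x) + (((a : ℝ) : ℂ) + Complex.I * x) =
        ((Y₀ : ℝ) : ℂ) := by push_cast; ring
    have s3 : (((Y₁ - a : ℝ) : ℂ) - Complex.I * x) + (((a : ℝ) : ℂ) + Complex.I * x) =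
        ((Y₁ : ℝ) : ℂ) := by push_cast; ring
    have hs1 : (((Y₀ - a : ℝ) : ℂ) - Complex.I * x) + (((Y₂ + a : ℝ) : ℂ) + Complex.I * x) ≠ 0 := by
      rw [s1]
      exact_mod_cast (by positivity : (Y₀ + Y₂ : ℝ) ≠ 0)
    have hs2 : (((Y₀ - a : ℝ) : ℂ) - Complex.I * x) + (((a : ℝ) : ℂ) + Complex.I * x) ≠ 0 := by
      rw [s2]
      exact_mod_cast h₀.ne'
    have hs3 : (((Y₁ - a : ℝ) : ℂ) - Complex.I * x) + (((a : ℝ) : ℂ) + Complex.I * x) ≠ 0 := by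
      rw [s3]
      exact_mod_cast h₁.ne'
    have h := quadx f1 f2 f3 f4 hs1 hs2 hs3
    rw [h, s1, s2, s3]
  have i1 := hg₁i.const_mul k₁
  have i2 := hg₂i.const_mul k₁
  have i3 := hg₃i.const_mul k₃
  have i4 := hg₄i.const_mul k₃
  have i12 : Integrable (fun x : ℝ =>
      k₁ * ((((Y₀ - a : ℝ) : ℂ) - Complex.I * x) * (((Y₁ - a : ℝ) : ℂ) - Complex.I * x))⁻¹ +
      k₁ * ((((Y₁ - a : ℝ) : ℂ) - Complex.I * x) * (((a : ℝ) : ℂ) + Complex.I * x))⁻¹) := i1.add i2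
  have i123 : Integrable (fun x : ℝ =>
      k₁ * ((((Y₀ - a : ℝ) : ℂ) - Complex.I * x) * (((Y₁ - a : ℝ) : ℂ) - Complex.I * x))⁻¹ +
      k₁ * ((((Y₁ - a : ℝ) : ℂ) - Complex.I * x) * (((a : ℝ) : ℂ) + Complex.I * x))⁻¹ +
      k₃ * ((((Y₁ - a : ℝ) : ℂ) - Complex.I * x) * (((Y₂ + a : ℝ) : ℂ) + Complex.I * x))⁻¹) :=
    i12.add i3
  rw [show Y₁ - a + a = Y₁ from by ring] at hg₂
  rw [show Y₁ - a + (Y₂ + a) = Y₁ + Y₂ from by ring] at hg₃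
  constructor
  · rw [show (fun x : ℝ =>
        (((Y₀ - a : ℝ) - Complex.I * x) * ((Y₁ - a : ℝ) - Complex.I * x) *
          ((Y₂ + a : ℝ) + Complex.I * x) * ((a : ℝ) + Complex.I * x))⁻¹) = _ from funext hdec]
    exact i123.add i4
  · rw [integral_congr_ae (ae_of_all _ hdec), integral_add i123 i4,
      integral_add i12 i3, integral_add i1 i2,
      integral_const_mul, integral_const_mul, integral_const_mul, integral_const_mul,
      hg₁, hg₂, hg₃, hg₄]
    have n1 : (Y₀ : ℂ) + Y₂ ≠ 0 := by
      exact_mod_cast (by positivity : (Y₀ + Y₂ : ℝ) ≠ 0)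
    have n1' : (Y₁ : ℂ) + Y₂ ≠ 0 := by
      exact_mod_cast (by positivity : (Y₁ + Y₂ : ℝ) ≠ 0)
    have n2 : (Y₀ : ℂ) ≠ 0 := by exact_mod_cast h₀.ne'
    have n3 : (Y₁ : ℂ) ≠ 0 := by exact_mod_cast h₁.ne'
    have n4 : (Y₂ : ℂ) ≠ 0 := by exact_mod_cast h₂.ne'
    have npi : (π : ℂ) ≠ 0 := by exact_mod_cast Real.pi_ne_zero
    have key := final_algebra npi n2 n3 n4 n1 n1'
    rw [hk₁, hk₃, show ((Nat.factorial 2 : ℕ) : ℂ) = 2 from by norm_num]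
    simp only [mul_zero, add_zero, zero_add]
    push_cast
    exact key
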